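/- Let $t, w$ be complex numbers and $x_1, \dots, x_n$ pairwise distinct complex numbers with $1 - t^{-1} x_i w \ne 0$ for all $i$ and $t \ne 0$. Then $\prod_{i=1}^n \frac{1 - x_i w}{1 - t^{-1} x_i w} - 1 = t^n - 1 + (1-t) \sum_{i=1}^n \frac{\prod_{k \ne i} \frac{x_i - t x_k}{x_i - x_k}}{1 - t^{-1} x_i w}$. -/

import Mathlib

open Finset

theorem key_partial_frac {ι : Type*} [DecidableEq ι] (t : ℂ) (ht : t ≠ 0) (x : ι → ℂ)
    (s : Finset ι) :
    Set.InjOn x s → ∀ w : ℂ, (∀ i ∈ s, 1 - t⁻¹ * x i * w ≠ 0) →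
    ∏ i ∈ s, (1 - x i * w) / (1 - t⁻¹ * x i * w) =
      t ^ s.card + (1 - t) * ∑ i ∈ s,
        (∏ k ∈ s.erase i, (x i - t * x k) / (x i - x k)) / (1 - t⁻¹ * x i * w) := by
  induction s using Finset.induction_on with
  | empty => simp
  | @insert j s hj ih =>
    intro hinj w hw
    have hinj' : Set.InjOn x s := hinj.mono (by simp [Finset.subset_insert])
    have hxj : ∀ i ∈ s, x i ≠ x j := by
      intro i hi h
      have : i = j := hinj (by simp [hi]) (by simp) h
      exact hj (this ▸ hi)
    have hDj : 1 - t⁻¹ * x j * w ≠ 0 := hw j (Finset.mem_insert_self _ _)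
    have hDi : ∀ i ∈ s, 1 - t⁻¹ * x i * w ≠ 0 := fun i hi =>
      hw i (Finset.mem_insert_of_mem hi)
    have hD' : ∀ i ∈ insert j s, t - x i * w ≠ 0 := by
      intro i hi
      have := mul_ne_zero ht (hw i hi)
      rwa [mul_sub, mul_one, show t * (t⁻¹ * x i * w) = x i * w by field_simp] at this
    have hDj' : t - x j * w ≠ 0 := hD' j (Finset.mem_insert_self _ _)
    -- key identity
    have hK : ∏ k ∈ s, (x j - t * x k) / (x j - x k) =
        t ^ s.card + (1 - t) * ∑ i ∈ s,
          (∏ k ∈ s.erase i, (x i - t * x k) / (x i - x k)) * (x j / (x j - x i)) := by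
      by_cases hxj0 : x j = 0
      · have h1 : ∀ k ∈ s, (x j - t * x k) / (x j - x k) = t := by
          intro k hk
          have hk0 : x k ≠ 0 := fun h => hxj k hk (h.trans hxj0.symm)
          rw [hxj0]
          field_simp
          ring
        rw [Finset.prod_congr rfl h1, Finset.prod_const]
        have h2 : ∀ i ∈ s, (∏ k ∈ s.erase i, (x i - t * x k) / (x i - x k)) *
            (x j / (x j - x i)) = 0 := by
          intro i hi
          have hi0 : x i ≠ 0 := fun h => hxj i hi (h.trans hxj0.symm)
          rw [hxj0]
          simp
        rw [Finset.sum_congr rfl h2]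
        simp
      · have hw' : ∀ i ∈ s, 1 - t⁻¹ * x i * (t / x j) ≠ 0 := by
          intro i hi
          have h : 1 - t⁻¹ * x i * (t / x j) = (x j - x i) / x j := by
            field_simp
          rw [h]
          exact div_ne_zero (sub_ne_zero.mpr fun h => hxj i hi h.symm) hxj0
        have := ih hinj' (t / x j) hw'
        have hprod : ∀ i ∈ s, (1 - x i * (t / x j)) / (1 - t⁻¹ * x i * (t / x j)) =
            (x j - t * x i) / (x j - x i) := by
          intro i hi
          have hne : x j - x i ≠ 0 := sub_ne_zero.mpr fun h => hxj i hi h.symm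
          field_simp
        have hsum : ∀ i ∈ s,
            (∏ k ∈ s.erase i, (x i - t * x k) / (x i - x k)) / (1 - t⁻¹ * x i * (t / x j)) =
            (∏ k ∈ s.erase i, (x i - t * x k) / (x i - x k)) * (x j / (x j - x i)) := by
          intro i hi
          have hne : x j - x i ≠ 0 := sub_ne_zero.mpr fun h => hxj i hi h.symm
          have h : 1 - t⁻¹ * x i * (t / x j) = (x j - x i) / x j := by field_simp
          rw [h, div_div_eq_mul_div, mul_div_assoc]
        rw [Finset.prod_congr rfl hprod, Finset.sum_congr rfl hsum] at this
        exact this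
    rw [Finset.prod_insert hj, Finset.sum_insert hj, Finset.card_insert_of_notMem hj,
      Finset.erase_insert hj]
    have hrw : ∀ i ∈ s, (∏ k ∈ (insert j s).erase i, (x i - t * x k) / (x i - x k)) /
        (1 - t⁻¹ * x i * w) =
        ((x i - t * x j) / (x i - x j) * ∏ k ∈ s.erase i, (x i - t * x k) / (x i - x k)) /
          (1 - t⁻¹ * x i * w) := by
      intro i hi
      have hij : j ≠ i := fun h => hj (h ▸ hi)
      rw [Finset.erase_insert_of_ne hij, Finset.prod_insert (fun h => hj (Finset.mem_of_mem_erase h))]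
    rw [Finset.sum_congr rfl hrw, ih hinj' w hDi, hK]
    have hterm : (∑ i ∈ s, (∏ k ∈ s.erase i, (x i - t * x k) / (x i - x k)) /
          (1 - t⁻¹ * x i * w)) * (t + (1 - t) / (1 - t⁻¹ * x j * w)) =
        (1 - t) / (1 - t⁻¹ * x j * w) *
          (∑ i ∈ s, (∏ k ∈ s.erase i, (x i - t * x k) / (x i - x k)) * (x j / (x j - x i))) +
        ∑ i ∈ s, ((x i - t * x j) / (x i - x j) * ∏ k ∈ s.erase i, (x i - t * x k) / (x i - x k)) /
          (1 - t⁻¹ * x i * w) := by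
      rw [Finset.sum_mul, Finset.mul_sum, ← Finset.sum_add_distrib]
      refine Finset.sum_congr rfl fun i hi => ?_
      have hne : x j - x i ≠ 0 := sub_ne_zero.mpr fun h => hxj i hi h.symm
      have hne' : x i - x j ≠ 0 := sub_ne_zero.mpr (hxj i hi)
      have h1 := hDi i hi
      have h2 := hD' i (Finset.mem_insert_of_mem hi)
      have h3 : t - w * x j ≠ 0 := by rw [mul_comm]; exact hDj'
      generalize (∏ k ∈ s.erase i, (x i - t * x k) / (x i - x k)) = c
      field_simp
      ring
    have hexp : (1 - x j * w) / (1 - t⁻¹ * x j * w) = t + (1 - t) / (1 - t⁻¹ * x j * w) := by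
      field_simp
      ring
    rw [hexp]
    linear_combination (1 - t) * hterm

theorem stmt6 (t w : ℂ) (ht : t ≠ 0) (n : ℕ) (x : Fin n → ℂ)
    (hx : Function.Injective x) (hw : ∀ i, 1 - t⁻¹ * x i * w ≠ 0) :
    ∏ i, (1 - x i * w) / (1 - t⁻¹ * x i * w) - 1 =
      t ^ n - 1 + (1 - t) * ∑ i,
        (∏ k ∈ Finset.univ.erase i, (x i - t * x k) / (x i - x k)) /
          (1 - t⁻¹ * x i * w) := by
  have h := key_partial_frac t ht x Finset.univ (hx.injOn) w (fun i _ => hw i)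
  rw [Finset.card_univ, Fintype.card_fin] at h
  rw [h]
  ring
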